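/- Let Λ be a measurable space, μ a probability measure on Λ, 𝒩 a set of probability measures on Λ, and g : Λ → ℝ a measurable function with 0 ≤ g(λ) ≤ 1 for every λ ∈ Λ. If ∫ g dν = 1 for every ν ∈ 𝒩, then ϖ(𝒩|μ) ≤ ∫ g dμ. -/

import Mathlib

open MeasureTheory

/-- The asymmetric overlap `ϖ(𝒩|μ)`: the infimum of `μ Ω` over measurable sets `Ω`
that have full measure for every measure in `𝒩`. -/
noncomputable def asymmetricOverlap {Λ : Type*} [MeasurableSpace Λ]
    (N : Set (Measure Λ)) (μ : Measure Λ) : ℝ :=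
  sInf { x : ℝ | ∃ Ω : Set Λ, MeasurableSet Ω ∧ (∀ ν ∈ N, ν Ω = 1) ∧ x = (μ Ω).toReal }

theorem overlap_le_born {Λ : Type*} [MeasurableSpace Λ]
    (μ : Measure Λ) [IsProbabilityMeasure μ]
    (N : Set (Measure Λ)) (hN : ∀ ν ∈ N, IsProbabilityMeasure ν)
    (g : Λ → ℝ) (hg : Measurable g)
    (hg0 : ∀ x : Λ, 0 ≤ g x) (hg1 : ∀ x : Λ, g x ≤ 1)
    (hint : ∀ ν ∈ N, ∫ x, g x ∂ν = 1) :
    asymmetricOverlap N μ ≤ ∫ x, g x ∂μ := by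
  set Ω : Set Λ := {x | g x = 1} with hΩdef
  have hΩm : MeasurableSet Ω := hg (measurableSet_singleton 1)
  -- integrability of g w.r.t. any probability measure
  have hintg : ∀ (ν : Measure Λ) [IsProbabilityMeasure ν], Integrable g ν := by
    intro ν _
    exact (integrable_const (1 : ℝ)).mono hg.aestronglyMeasurable
      (Filter.Eventually.of_forall fun x => by
        rw [Real.norm_eq_abs, abs_of_nonneg (hg0 x)]
        simpa using hg1 x)
  have hfull : ∀ ν ∈ N, ν Ω = 1 := by
    intro ν hν
    haveI := hN ν hν
    have h1 : ∫ x, (1 - g x) ∂ν = 0 := by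
      rw [integral_sub (integrable_const 1) (hintg ν), integral_const, hint ν hν]
      simp
    have h0 : (fun x => 1 - g x) =ᵐ[ν] 0 :=
      (integral_eq_zero_iff_of_nonneg (fun x => by dsimp; linarith [hg1 x])
        ((integrable_const (1:ℝ)).sub (hintg ν))).mp h1
    rw [← prob_compl_eq_zero_iff hΩm]
    refine measure_mono_null ?_ (ae_iff.mp h0)
    intro x hx
    simp only [Set.mem_compl_iff, hΩdef, Set.mem_setOf_eq] at hx
    simp only [Set.mem_setOf_eq, Pi.zero_apply]
    intro h
    exact hx (by linarith)
  -- The infimum is at most μ Ω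
  have hmem : (μ Ω).toReal ∈
      { x : ℝ | ∃ Ω : Set Λ, MeasurableSet Ω ∧ (∀ ν ∈ N, ν Ω = 1) ∧ x = (μ Ω).toReal } :=
    ⟨Ω, hΩm, hfull, rfl⟩
  have hbdd : BddBelow { x : ℝ | ∃ Ω : Set Λ, MeasurableSet Ω ∧ (∀ ν ∈ N, ν Ω = 1)
      ∧ x = (μ Ω).toReal } := ⟨0, fun x ⟨_, _, _, hx⟩ => hx ▸ ENNReal.toReal_nonneg⟩
  have h1 : asymmetricOverlap N μ ≤ (μ Ω).toReal := csInf_le hbdd hmem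
  refine h1.trans ?_
  have : (μ Ω).toReal = ∫ x, Ω.indicator (fun _ => (1:ℝ)) x ∂μ := by
    rw [integral_indicator_const _ hΩm]
    simp
    rfl
  rw [this]
  refine integral_mono (Integrable.indicator (integrable_const 1) hΩm) (hintg μ) ?_
  intro x
  by_cases hx : x ∈ Ω
  · simp [Set.indicator_of_mem hx, hΩdef, Set.mem_setOf_eq.mp hx]
  · simp [Set.indicator_of_notMem hx, hg0 x]
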